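/- Suppose M ≥ 3, ω > 0, and 0 ≤ c ≤ ω²/(2(M−2)). Then with ω_r = √(ω² + 4c·sin²(πr/M)) and β_k = −ω_k + (1/(M−1))·Σ_{j=1}^{M} ω_j, we have β_k ≥ 0 for all 1 ≤ k ≤ M. -/

import Mathlib

open Real Finset

theorem beta_nonneg_of_weak_coupling (M : ℕ) (hM : 3 ≤ M) (ω c : ℝ)
    (hω : 0 < ω) (hc0 : 0 ≤ c) (hc : c ≤ ω ^ 2 / (2 * (M - 2 : ℝ)))
    (Ω β : ℕ → ℝ)
    (hΩ : ∀ r, Ω r = Real.sqrt (ω ^ 2 + 4 * c * Real.sin (π * r / M) ^ 2))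
    (hβ : ∀ k, β k = -Ω k + (1 / (M - 1 : ℝ)) * ∑ j ∈ Finset.Icc 1 M, Ω j)
    (k : ℕ) (hk1 : 1 ≤ k) (hk2 : k ≤ M) :
    0 ≤ β k := by
  have hM3 : (3 : ℝ) ≤ (M : ℝ) := by exact_mod_cast hM
  have hM2pos : (0 : ℝ) < (M : ℝ) - 2 := by linarith
  have hM1pos : (0 : ℝ) < (M : ℝ) - 1 := by linarith
  -- each Ω j ≥ ω
  have hΩge : ∀ r, ω ≤ Ω r := by
    intro r
    rw [hΩ r]
    have h1 : (0:ℝ) ≤ 4 * c * Real.sin (π * r / M) ^ 2 := by positivity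
    nlinarith [Real.sq_sqrt (by nlinarith : (0:ℝ) ≤ ω ^ 2 + 4 * c * Real.sin (π * r / M) ^ 2),
      Real.sqrt_nonneg (ω ^ 2 + 4 * c * Real.sin (π * r / M) ^ 2)]
  -- key bound: (M-2) * Ω k ≤ (M-1) * ω
  have hkey : ((M : ℝ) - 2) * Ω k ≤ ((M : ℝ) - 1) * ω := by
    rw [hΩ k]
    have hsin : Real.sin (π * k / M) ^ 2 ≤ 1 := by
      nlinarith [Real.neg_one_le_sin (π * k / M), Real.sin_le_one (π * k / M)]
    have hsin0 : (0:ℝ) ≤ Real.sin (π * k / M) ^ 2 := sq_nonneg _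
    have hc' : c * (2 * ((M : ℝ) - 2)) ≤ ω ^ 2 :=
      (le_div_iff₀ (by positivity)).mp hc
    have harg : ω ^ 2 + 4 * c * Real.sin (π * k / M) ^ 2 ≤
        (((M : ℝ) - 1) * ω / ((M : ℝ) - 2)) ^ 2 := by
      rw [div_pow]
      rw [le_div_iff₀ (by positivity)]
      nlinarith [mul_le_mul_of_nonneg_left hsin (by linarith : (0:ℝ) ≤ 4 * c),
        mul_le_mul_of_nonneg_right hc' (by nlinarith : (0:ℝ) ≤ 2 * ((M:ℝ) - 2))]
    have h2 : Real.sqrt (ω ^ 2 + 4 * c * Real.sin (π * k / M) ^ 2) ≤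
        ((M : ℝ) - 1) * ω / ((M : ℝ) - 2) := by
      have := Real.sqrt_le_sqrt harg
      rwa [Real.sqrt_sq (by positivity)] at this
    calc ((M : ℝ) - 2) * Real.sqrt (ω ^ 2 + 4 * c * Real.sin (π * k / M) ^ 2)
        ≤ ((M : ℝ) - 2) * (((M : ℝ) - 1) * ω / ((M : ℝ) - 2)) :=
          mul_le_mul_of_nonneg_left h2 (le_of_lt hM2pos)
      _ = ((M : ℝ) - 1) * ω := by field_simp
  -- sum bound
  have hkmem : k ∈ Finset.Icc 1 M := Finset.mem_Icc.mpr ⟨hk1, hk2⟩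
  have hsum : Ω k + ((M : ℝ) - 1) * ω ≤ ∑ j ∈ Finset.Icc 1 M, Ω j := by
    rw [← Finset.add_sum_erase _ Ω hkmem]
    have hcard : ((Finset.Icc 1 M).erase k).card = M - 1 := by
      rw [Finset.card_erase_of_mem hkmem, Nat.card_Icc]
      omega
    have h3 : ((M : ℝ) - 1) * ω ≤ ∑ j ∈ (Finset.Icc 1 M).erase k, Ω j := by
      have := Finset.card_nsmul_le_sum ((Finset.Icc 1 M).erase k) Ω ω (fun i _ => hΩge i)
      rw [hcard, nsmul_eq_mul] at this
      have hcast : ((M - 1 : ℕ) : ℝ) = (M : ℝ) - 1 := by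
        have : 1 ≤ M := by omega
        push_cast [this]; ring
      rw [hcast] at this
      exact this
    linarith
  rw [hβ k]
  have hinv : (0:ℝ) < 1 / ((M : ℝ) - 1) := by positivity
  have h6 := mul_le_mul_of_nonneg_left hsum hinv.le
  have h7 : 0 ≤ ((M : ℝ) - 1) * ω - ((M : ℝ) - 2) * Ω k := by linarith
  have h8 : 0 ≤ (1 / ((M : ℝ) - 1)) * (((M : ℝ) - 1) * ω - ((M : ℝ) - 2) * Ω k) :=
    mul_nonneg hinv.le h7
  have e : -Ω k + (1 / ((M : ℝ) - 1)) * (Ω k + ((M : ℝ) - 1) * ω) =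
      (1 / ((M : ℝ) - 1)) * (((M : ℝ) - 1) * ω - ((M : ℝ) - 2) * Ω k) := by
    field_simp; ring
  linarith
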